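/- If ν is a strong limit cardinal, then any Tychonoff product of weakly initially <ν-compact topological spaces is weakly initially <ν-compact. -/

import Mathlib

open Cardinal Set

universe u v

/-- `x` is a `D`-limit point of the family of sets `O`. -/
def DLimitSets {X : Type u} {I : Type v} [TopologicalSpace X]
    (D : Ultrafilter I) (O : I → Set X) (x : X) : Prop :=
  ∀ U ∈ nhds x, {i | (U ∩ O i).Nonempty} ∈ D

/-- `X` is `D`-pseudocompact. -/
def DPseudocompact (X : Type u) {I : Type v} [TopologicalSpace X]
    (D : Ultrafilter I) : Prop :=
  ∀ O : I → Set X, (∀ i, IsOpen (O i)) → (∀ i, (O i).Nonempty) →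
    ∃ x : X, DLimitSets D O x

/-- Every open cover of cardinality at most `lam` has a finite subfamily with dense union. -/
def WeaklyInitiallyCompact (X : Type u) [TopologicalSpace X] (lam : Cardinal.{u}) : Prop :=
  ∀ 𝒰 : Set (Set X), (∀ U ∈ 𝒰, IsOpen U) → ⋃₀ 𝒰 = Set.univ →
    Cardinal.mk 𝒰 ≤ lam →
    ∃ t : Finset (Set X), ↑t ⊆ 𝒰 ∧ Dense (⋃₀ (t : Set (Set X)))

/-- A regular ultrafilter over `I` (regular of degree `|I|`): there is an `I`-indexed
family of members of `D` every infinite subfamily of which has empty intersection. -/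
def RegularUltrafilter {I : Type v} (D : Ultrafilter I) : Prop :=
  ∃ Z : I → Set I, (∀ i, Z i ∈ D) ∧
    ∀ S : Set I, S.Infinite → ⋂ i ∈ S, Z i = ∅

/-- On the finite subsets of an infinite type there is a regular ultrafilter. -/
lemma exists_regularUltrafilter (α : Type u) [Infinite α] :
    ∃ D : Ultrafilter (Finset α), RegularUltrafilter D := by
  refine ⟨Ultrafilter.of Filter.atTop, fun s => Set.Ici s, ?_, ?_⟩
  · intro s
    exact Ultrafilter.of_le Filter.atTop (Filter.Ici_mem_atTop s)
  · intro S hS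
    by_contra h
    obtain ⟨t, ht⟩ := Set.nonempty_iff_ne_empty.mpr h
    simp only [Set.mem_iInter] at ht
    have hsub : S ⊆ ↑t.powerset := by
      intro s hs
      simp only [Finset.coe_powerset, Set.mem_preimage, Set.mem_powerset_iff]
      exact Finset.coe_subset.mpr (ht s hs)
    exact hS (Set.Finite.subset (t.powerset.finite_toSet) hsub)

/-- Weak initial compactness at level `#(Set I)` implies `D`-pseudocompactness. -/
lemma dpc_of_wic {X I : Type u} [TopologicalSpace X]
    (D : Ultrafilter I) {lam : Cardinal.{u}} (hlam : #(Set I) ≤ lam)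
    (h : WeaklyInitiallyCompact X lam) (O : I → Set X)
    (hO : ∀ i, IsOpen (O i)) (hne : ∀ i, (O i).Nonempty) :
    ∃ x : X, DLimitSets D O x := by
  classical
  by_contra hlim
  push_neg at hlim
  set G : Set I → Set X :=
    fun S => {x | ∃ U, IsOpen U ∧ x ∈ U ∧ {i | (U ∩ O i).Nonempty} ⊆ S} with hG
  have hGmono : ∀ S S' : Set I, S ⊆ S' → G S ⊆ G S' := by
    rintro S S' hSS x ⟨U, hU1, hU2, hU3⟩
    exact ⟨U, hU1, hU2, hU3.trans hSS⟩
  set 𝒰 : Set (Set X) := G '' {S | S ∉ D} with h𝒰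
  have hopen : ∀ U ∈ 𝒰, IsOpen U := by
    rintro _ ⟨S, -, rfl⟩
    rw [isOpen_iff_forall_mem_open]
    rintro x ⟨U, hU1, hU2, hU3⟩
    exact ⟨U, fun y hy => ⟨U, hU1, hy, hU3⟩, hU1, hU2⟩
  have hcover : ⋃₀ 𝒰 = Set.univ := by
    apply Set.eq_univ_of_forall
    intro x
    have := hlim x
    rw [DLimitSets] at this
    push_neg at this
    obtain ⟨U, hU, hUD⟩ := this
    obtain ⟨V, hVU, hVopen, hxV⟩ := mem_nhds_iff.mp hU
    refine ⟨G {i | (U ∩ O i).Nonempty}, ⟨_, hUD, rfl⟩, V, hVopen, hxV, ?_⟩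
    intro i ⟨y, hy1, hy2⟩
    exact ⟨y, hVU hy1, hy2⟩
  have hcard : #𝒰 ≤ lam := by
    refine le_trans (le_trans Cardinal.mk_image_le (Cardinal.mk_set_le _)) hlam
  obtain ⟨t, ht, hdense⟩ := h 𝒰 hopen hcover hcard
  -- find a single S ∉ D dominating all members of t
  have key : ∀ t : Finset (Set X), ↑t ⊆ 𝒰 → ∃ S : Set I, S ∉ D ∧ ⋃₀ (t : Set (Set X)) ⊆ G S := by
    intro t
    induction t using Finset.induction_on with
    | empty =>
      intro _
      exact ⟨∅, Filter.empty_notMem (D : Filter I), by simp⟩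
    | @insert W t hW ih =>
      intro hsub
      have h1 : ↑t ⊆ 𝒰 := by
        intro V hV; exact hsub (by simp [hV])
      obtain ⟨S, hS, hSsub⟩ := ih h1
      have hW𝒰 : W ∈ 𝒰 := hsub (by simp)
      obtain ⟨S', hS', rfl⟩ := hW𝒰
      refine ⟨S ∪ S', ?_, ?_⟩
      · intro hmem
        rcases Ultrafilter.union_mem_iff.mp hmem with h | h
        · exact hS h
        · exact hS' h
      · rw [Finset.coe_insert, Set.sUnion_insert]
        apply Set.union_subset
        · exact (hGmono _ _ Set.subset_union_right)
        · exact hSsub.trans (hGmono _ _ Set.subset_union_left)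
  obtain ⟨S, hS, hSsub⟩ := key t ht
  have hSc : Sᶜ ∈ D := Ultrafilter.compl_mem_iff_notMem.mpr hS
  obtain ⟨i, hi⟩ := Ultrafilter.nonempty_of_mem hSc
  have hdense' : Dense (G S) := hdense.mono hSsub
  obtain ⟨x, hx1, hx2⟩ := hdense'.inter_open_nonempty (O i) (hO i) (hne i)
  obtain ⟨U, hU1, hU2, hU3⟩ := hx2
  exact hi (hU3 ⟨x, hU2, hx1⟩)

/-- `D`-pseudocompactness for a regular ultrafilter `D` on `I` implies weak initial
`#I`-compactness. -/
lemma wic_of_dpc {X I : Type u} [TopologicalSpace X]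
    (D : Ultrafilter I) (hreg : RegularUltrafilter D)
    (h : DPseudocompact X D) : WeaklyInitiallyCompact X (#I) := by
  intro 𝒰 hopen hcover hcard
  rcases isEmpty_or_nonempty X with hX | hX
  · refine ⟨∅, by simp, ?_⟩
    simp only [Finset.coe_empty, Set.sUnion_empty]
    rw [dense_iff_closure_eq, closure_empty, eq_comm, Set.univ_eq_empty_iff]
    exact hX
  classical
  by_contra hcon
  push_neg at hcon
  obtain ⟨Z, hZ1, hZ2⟩ := hreg
  -- enumeration of 𝒰 by I
  have h𝒰ne : Nonempty ↥𝒰 := by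
    obtain ⟨x⟩ := hX
    have : x ∈ ⋃₀ 𝒰 := hcover ▸ Set.mem_univ x
    obtain ⟨U, hU, -⟩ := this
    exact ⟨⟨U, hU⟩⟩
  obtain ⟨g⟩ := Cardinal.le_def _ _ |>.mp hcard
  set f : I → Set X := fun i => ↑(Function.invFun g i) with hf
  have hfmem : ∀ i, f i ∈ 𝒰 := fun i => (Function.invFun g i).2
  have hfsurj : ∀ U ∈ 𝒰, ∃ β, f β = U := by
    intro U hU
    refine ⟨g ⟨U, hU⟩, ?_⟩
    rw [hf]
    simp [Function.leftInverse_invFun g.injective ⟨U, hU⟩]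
  -- finiteness of the "trace" sets
  have hfin : ∀ i, {β : I | i ∈ Z β}.Finite := by
    intro i
    by_contra hinf
    have := hZ2 _ hinf
    have hmem : i ∈ ⋂ β ∈ {β : I | i ∈ Z β}, Z β := by
      simp only [Set.mem_iInter]
      intro β hβ; exact hβ
    rw [this] at hmem
    exact hmem
  set T : I → Finset (Set X) := fun i => (hfin i).toFinset.image f with hT
  have hTsub : ∀ i, ↑(T i) ⊆ 𝒰 := by
    intro i V hV
    simp only [hT, Finset.coe_image, Set.mem_image] at hV
    obtain ⟨β, -, rfl⟩ := hV
    exact hfmem β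
  set O : I → Set X := fun i => (closure (⋃₀ ↑(T i)))ᶜ with hO
  have hOopen : ∀ i, IsOpen (O i) := fun i => isClosed_closure.isOpen_compl
  have hOne : ∀ i, (O i).Nonempty := by
    intro i
    rw [hO]
    rw [Set.nonempty_compl]
    intro heq
    exact hcon (T i) (hTsub i) (dense_iff_closure_eq.mpr heq)
  obtain ⟨x, hx⟩ := h O hOopen hOne
  have hxmem : x ∈ ⋃₀ 𝒰 := hcover ▸ Set.mem_univ x
  obtain ⟨U, hU, hxU⟩ := hxmem
  obtain ⟨β, rfl⟩ := hfsurj U hU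
  have hnhds : f β ∈ nhds x := (hopen _ hU).mem_nhds hxU
  have hA : {i | (f β ∩ O i).Nonempty} ∩ Z β ∈ D :=
    Filter.inter_mem (hx _ hnhds) (hZ1 β)
  obtain ⟨i, hi1, hi2⟩ := Ultrafilter.nonempty_of_mem hA
  obtain ⟨y, hy1, hy2⟩ := hi1
  have : f β ∈ ↑(T i) :=
    Finset.mem_coe.mpr (Finset.mem_image_of_mem f ((hfin i).mem_toFinset.mpr hi2))
  have hyclos : y ∈ closure (⋃₀ ↑(T i)) :=
    subset_closure ⟨f β, this, hy1⟩
  exact hy2 hyclos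

/-- Products preserve `D`-pseudocompactness. -/
lemma dpc_pi {J : Type u} {X : J → Type u} [∀ j, TopologicalSpace (X j)] {I : Type u}
    (D : Ultrafilter I) (h : ∀ j, DPseudocompact (X j) D) :
    DPseudocompact (∀ j, X j) D := by
  classical
  intro O hO hne
  have hI : Nonempty I := Filter.nonempty_of_neBot D
  choose f hf using hne
  have hbox := fun i => isOpen_pi_iff.mp (hO i) (f i) (hf i)
  choose F u hu hsub using hbox
  set C : (j : J) → I → Set (X j) :=
    fun j i => if j ∈ F i then u i j else Set.univ with hC
  have hCopen : ∀ j i, IsOpen (C j i) := by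
    intro j i
    rw [hC]
    by_cases hj : j ∈ F i
    · simp only [hj, if_pos]
      exact (hu i j hj).1
    · simp [hj]
  have hCne : ∀ j i, (C j i).Nonempty := by
    intro j i
    rw [hC]
    by_cases hj : j ∈ F i
    · simp only [hj, if_pos]
      exact ⟨f i j, (hu i j hj).2⟩
    · simp only [hj, if_neg, not_false_iff]
      exact ⟨f (Classical.arbitrary I) j, Set.mem_univ _⟩
  have hx := fun j => h j (C j) (hCopen j) (hCne j)
  choose x hxlim using hx
  refine ⟨x, ?_⟩
  intro U hU
  obtain ⟨V, hVU, hVopen, hxV⟩ := mem_nhds_iff.mp hU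
  obtain ⟨G, v, hv, hvsub⟩ := isOpen_pi_iff.mp hVopen x hxV
  have hAmem : (⋂ j ∈ G, {i | (v j ∩ C j i).Nonempty}) ∈ D := by
    apply (Filter.biInter_mem G.finite_toSet).mpr
    intro j hj
    exact hxlim j (v j) ((hv j hj).1.mem_nhds (hv j hj).2)
  apply Filter.mem_of_superset hAmem
  intro i hi
  simp only [Set.mem_iInter] at hi
  have hpt : ∀ j, ∃ z : X j, (j ∈ G → z ∈ v j) ∧ (j ∈ F i → z ∈ u i j) := by
    intro j
    by_cases hj : j ∈ G
    · obtain ⟨z, hz1, hz2⟩ := hi j hj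
      refine ⟨z, fun _ => hz1, fun hjF => ?_⟩
      rw [hC] at hz2
      simpa [hjF] using hz2
    · refine ⟨f i j, fun hjG => absurd hjG hj, fun hjF => (hu i j hjF).2⟩
  choose z hz1 hz2 using hpt
  refine ⟨z, hVU (hvsub ?_), hsub i ?_⟩
  · intro j hj
    exact hz1 j hj
  · intro j hj
    exact hz2 j hj

theorem product_weaklyInitiallyLtCompact (ν : Cardinal.{u})
    (hν : ν.IsStrongLimit)
    {J : Type u} {X : J → Type u} [∀ j, TopologicalSpace (X j)]
    (hX : ∀ j, ∀ lam < ν, WeaklyInitiallyCompact (X j) lam) :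
    ∀ lam < ν, WeaklyInitiallyCompact (∀ j, X j) lam := by
  intro lam hlam 𝒰 hopen hcover hcard
  rcases lt_or_ge lam ℵ₀ with hfin | hinf
  · -- finite case: take the whole cover
    have hfinU : 𝒰.Finite := by
      rw [← Set.finite_coe_iff]
      exact Cardinal.lt_aleph0_iff_finite.mp (lt_of_le_of_lt hcard hfin)
    refine ⟨hfinU.toFinset, by simp, ?_⟩
    rw [Set.Finite.coe_toFinset, hcover]
    exact dense_univ
  · set α := lam.out with hα
    have hinfα : Infinite α := Cardinal.infinite_iff.mpr (by rwa [Cardinal.mk_out])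
    obtain ⟨D, hD⟩ := exists_regularUltrafilter α
    have hcardI : #(Finset α) = lam := by
      rw [Cardinal.mk_finset_of_infinite, Cardinal.mk_out]
    have hSetI : #(Set (Finset α)) = 2 ^ lam := by
      rw [Cardinal.mk_set, hcardI]
    have hpc : ∀ j, DPseudocompact (X j) D := by
      intro j O hO hne
      exact dpc_of_wic D (le_of_eq hSetI) (hX j (2 ^ lam) (hν.two_power_lt hlam)) O hO hne
    have hwic := wic_of_dpc D hD (dpc_pi D hpc)
    exact hwic 𝒰 hopen hcover (hcard.trans (le_of_eq hcardI.symm))
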